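/- Let U be a unit interval order and G = inc(U). Then the G-power sum symmetric function p_k^G = φ_G(p_k) satisfies p_k^G = Σ over correct sequences (w_1,...,w_k) of elements of U of the product w_1 · w_2 ··· w_k. In particular p_k^G has nonnegative integer coefficients as a polynomial in the vertex variables. -/

import Mathlib

open scoped Classical

/-- The image `φ(p_k)` of the `k`-th power sum under the ring homomorphism
determined by `e_i ↦ e i`, defined via Newton's identity
`p_k = e_1 p_{k-1} - e_2 p_{k-2} + ⋯ + (-1)^{k-1} k e_k`. -/
noncomputable def pG {R : Type*} [CommRing R] (e : ℕ → R) : ℕ → R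
  | 0 => 0
  | (k + 1) =>
    (-1 : R) ^ k * (k + 1 : ℕ) * e (k + 1) +
      ∑ i ∈ Finset.range k, (-1 : R) ^ i * e (i + 1) * pG e (k - i)
  decreasing_by omega

/-- The `m`-th elementary `G`-symmetric polynomial for `G = inc(U)`,
`U = {v 0, ..., v (n-1)} ⊂ ℝ` a unit interval order: stable sets of the
incomparability graph are the sets of indices with pairwise distances `≥ 1`. -/
noncomputable def eGfin (n : ℕ) (v : Fin n → ℝ) (m : ℕ) : MvPolynomial (Fin n) ℤ :=
  ∑ S ∈ ((Finset.univ : Finset (Fin n)).powersetCard m).filter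
      (fun S => ∀ a ∈ S, ∀ b ∈ S, a ≠ b → 1 ≤ |v a - v b|),
    ∏ i ∈ S, MvPolynomial.X i

/-- The set of correct sequences of length `k` of elements of the unit interval
order `{v 0, ..., v (n-1)}` (as functions `Fin k → Fin n`): consecutive entries
satisfy `w_i ⊁ w_{i+1}`, and each entry `w_j` (`j ≥ 2`) has an earlier entry
`w_i ⊀ w_j`. -/
noncomputable def corrects (n k : ℕ) (v : Fin n → ℝ) : Finset (Fin k → Fin n) :=
  Finset.univ.filter (fun w =>
    (∀ i : ℕ, (h : i + 1 < k) → ¬ (v (w ⟨i + 1, h⟩) + 1 ≤ v (w ⟨i, by omega⟩))) ∧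
    (∀ j : ℕ, (h : j < k) → 0 < j →
      ∃ i : ℕ, ∃ _ : i < j, ¬ (v (w ⟨i, by omega⟩) + 1 ≤ v (w ⟨j, h⟩))))

namespace Stmt10

variable {n : ℕ} (v : Fin n → ℝ)

/-- correctness of a list -/
def corrL (l : List (Fin n)) : Prop :=
  (∀ i : ℕ, (h : i + 1 < l.length) → ¬ (v (l[i+1]'h) + 1 ≤ v (l[i]'(by omega)))) ∧
  (∀ j : ℕ, (h : j < l.length) → 0 < j →
    ∃ i : ℕ, ∃ _ : i < j, ¬ (v (l[i]'(by omega)) + 1 ≤ v (l[j]'h)))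

lemma corrL_singleton (y : Fin n) : corrL v [y] := by
  constructor
  · intro i h; simp at h
  · intro j h hj; simp at h; omega

lemma mem_corrects_iff {m : ℕ} (w : Fin m → Fin n) :
    w ∈ corrects n m v ↔ corrL v (List.ofFn w) := by
  rw [corrects, Finset.mem_filter]
  simp only [Finset.mem_univ, true_and, corrL, List.length_ofFn, List.getElem_ofFn]

lemma corrL_concat {l : List (Fin n)} (hl : l ≠ []) (y : Fin n) :
    corrL v (l ++ [y]) ↔
      corrL v l ∧ ¬ (v y + 1 ≤ v (l.getLast hl)) ∧ ∃ a ∈ l, ¬ (v a + 1 ≤ v y) := by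
  have hL : 0 < l.length := List.length_pos_iff.2 hl
  have e1 : ∀ (i : ℕ) (hi : i < l.length) (h : i < (l ++ [y]).length),
      (l ++ [y])[i]'h = l[i]'hi := fun i hi h => List.getElem_append_left hi
  have e2 : ∀ (h : l.length < (l ++ [y]).length),
      (l ++ [y])[l.length]'h = y := fun h => List.getElem_concat_length (l := l) (a := y) rfl h
  have hlast : l.getLast hl = l[l.length - 1]'(by omega) := List.getLast_eq_getElem (l := l) hl
  have hlen : (l ++ [y]).length = l.length + 1 := by simp
  constructor
  · rintro ⟨h1, h2⟩
    refine ⟨⟨fun i h => ?_, fun j h hj => ?_⟩, ?_, ?_⟩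
    · have t := h1 i (by omega)
      rwa [e1 (i+1) (by omega), e1 i (by omega)] at t
    · obtain ⟨i, hij, t⟩ := h2 j (by omega) hj
      exact ⟨i, hij, by rwa [e1 i (by omega), e1 j (by omega)] at t⟩
    · have t := h1 (l.length - 1) (by omega)
      have hids : l.length - 1 + 1 = l.length := by omega
      rw [hlast]
      simp only [hids] at t
      rwa [e2, e1 (l.length - 1) (by omega)] at t
    · obtain ⟨i, hij, t⟩ := h2 l.length (by omega) (by omega)
      rw [e2, e1 i (by omega)] at t
      exact ⟨l[i]'(by omega), List.getElem_mem _, t⟩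
  · rintro ⟨⟨h1, h2⟩, hjunc, a, ha, hay⟩
    constructor
    · intro i h
      rcases Nat.lt_or_ge (i+1) l.length with hc | hc
      · rw [e1 (i+1) hc, e1 i (by omega)]
        exact h1 i hc
      · have hi1 : i + 1 = l.length := by omega
        have hi : i = l.length - 1 := by omega
        simp only [hi1]
        rw [e2, e1 i (by omega)]
        simp only [hi]
        rw [hlast] at hjunc
        exact hjunc
    · intro j h hj
      rcases Nat.lt_or_ge j l.length with hc | hc
      · obtain ⟨i, hij, t⟩ := h2 j hc hj
        exact ⟨i, hij, by rwa [e1 i (by omega), e1 j (by omega)]⟩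
      · have hj1 : j = l.length := by omega
        obtain ⟨i, hi, hia⟩ := List.mem_iff_getElem.1 ha
        refine ⟨i, by omega, ?_⟩
        simp only [hj1]
        rw [e2, e1 i (by omega), hia]
        exact hay

/-- correct lists of length m -/
noncomputable def CL (m : ℕ) : Finset (List (Fin n)) := (corrects n m v).image List.ofFn

lemma mem_CL {m : ℕ} {l : List (Fin n)} : l ∈ CL v m ↔ l.length = m ∧ corrL v l := by
  constructor
  · rintro h
    obtain ⟨w, hw, rfl⟩ := Finset.mem_image.1 h
    exact ⟨by simp, (mem_corrects_iff v w).1 hw⟩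
  · rintro ⟨rfl, hc⟩
    refine Finset.mem_image.2 ⟨l.get, ?_, List.ofFn_get l⟩
    rw [mem_corrects_iff, List.ofFn_get]
    exact hc

lemma P_eq (m : ℕ) :
    (∑ w ∈ corrects n m v, ∏ i, (MvPolynomial.X (w i) : MvPolynomial (Fin n) ℤ)) =
      ∑ l ∈ CL v m, (l.map MvPolynomial.X).prod := by
  rw [CL, Finset.sum_image (fun a _ b _ h => List.ofFn_inj.1 h)]
  refine Finset.sum_congr rfl fun w _ => ?_
  rw [List.map_ofFn, List.prod_ofFn]
  rfl

def chainP (S : Finset (Fin n)) : Prop := ∀ a ∈ S, ∀ b ∈ S, a ≠ b → 1 ≤ |v a - v b|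

noncomputable def chainsF (m : ℕ) : Finset (Finset (Fin n)) :=
  ((Finset.univ : Finset (Fin n)).powersetCard m).filter fun S => chainP v S

lemma eGfin_eq (m : ℕ) :
    eGfin n v m = ∑ S ∈ chainsF v m, ∏ a ∈ S, MvPolynomial.X a := by
  unfold eGfin chainsF chainP
  refine Finset.sum_congr ?_ fun _ _ => rfl
  ext S
  simp only [Finset.mem_filter]

lemma mem_chainsF {m : ℕ} {S : Finset (Fin n)} :
    S ∈ chainsF v m ↔ S.card = m ∧ chainP v S := by
  simp [chainsF, Finset.mem_powersetCard_univ]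

/-- the weight of an object -/
noncomputable def fw (o : Finset (Fin n) × List (Fin n)) : MvPolynomial (Fin n) ℤ :=
  (-1) ^ o.1.card * ((∏ a ∈ o.1, MvPolynomial.X a) * (o.2.map MvPolynomial.X).prod)

/-- the set of objects -/
noncomputable def Om (k : ℕ) : Finset (Finset (Fin n) × List (Fin n)) :=
  (Finset.range (k+1)).biUnion fun i => (chainsF v i) ×ˢ (CL v (k+1-i))

lemma mem_Om {k : ℕ} {o : Finset (Fin n) × List (Fin n)} : o ∈ Om v k ↔
    chainP v o.1 ∧ corrL v o.2 ∧ o.2 ≠ [] ∧ o.1.card + o.2.length = k+1 := by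
  simp only [Om, Finset.mem_biUnion, Finset.mem_range, Finset.mem_product, mem_chainsF, mem_CL]
  constructor
  · rintro ⟨i, hi, ⟨hcard, hchain⟩, hlen, hcorr⟩
    refine ⟨hchain, hcorr, ?_, by omega⟩
    intro h
    rw [h] at hlen
    simp at hlen
    omega
  · rintro ⟨hchain, hcorr, hne, hsum⟩
    have hpos : 0 < o.2.length := List.length_pos_iff.2 hne
    exact ⟨o.1.card, by omega, ⟨rfl, hchain⟩, by omega, hcorr⟩

lemma LHS_eq (k : ℕ) :
    ∑ i ∈ Finset.range (k+1), (-1 : MvPolynomial (Fin n) ℤ)^i * eGfin n v i *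
        (∑ w ∈ corrects n (k+1-i) v, ∏ j, MvPolynomial.X (w j))
      = ∑ o ∈ Om v k, fw o := by
  rw [Om, Finset.sum_biUnion]
  · refine Finset.sum_congr rfl fun i hi => ?_
    rw [P_eq, eGfin_eq, Finset.sum_product]
    rw [mul_assoc, Finset.sum_mul_sum, Finset.mul_sum]
    refine Finset.sum_congr rfl fun S hS => ?_
    rw [Finset.mul_sum]
    refine Finset.sum_congr rfl fun l hl => ?_
    have hcard : S.card = i := ((mem_chainsF v).1 hS).1
    simp only [fw, hcard]
    try ring

  · intro i hi j hj hij
    simp only [Finset.disjoint_left]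
    rintro o ho1 ho2
    have h1 : o.1.card = i := ((mem_chainsF v).1 (Finset.mem_product.1 ho1).1).1
    have h2 : o.1.card = j := ((mem_chainsF v).1 (Finset.mem_product.1 ho2).1).1
    exact hij (h1 ▸ h2 ▸ rfl)

/-- elements of `S` that can be legally appended to `l` -/
noncomputable def blockers (S : Finset (Fin n)) (l : List (Fin n)) : Finset (Fin n) :=
  S.filter fun s => (∀ x ∈ l.getLast?, ¬ (v s + 1 ≤ v x)) ∧ ∃ a ∈ l, ¬ (v a + 1 ≤ v s)

lemma mem_blockers {S : Finset (Fin n)} {l : List (Fin n)} {s : Fin n} (hl : l ≠ []) :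
    s ∈ blockers v S l ↔
      s ∈ S ∧ ¬ (v s + 1 ≤ v (l.getLast hl)) ∧ ∃ a ∈ l, ¬ (v a + 1 ≤ v s) := by
  simp [blockers, List.getLast?_eq_getLast hl]

noncomputable def amax (B : Finset (Fin n)) (h : B.Nonempty) : Fin n :=
  (Finset.exists_max_image B v h).choose

lemma amax_mem (B : Finset (Fin n)) (h : B.Nonempty) : amax v B h ∈ B :=
  (Finset.exists_max_image B v h).choose_spec.1

lemma amax_max (B : Finset (Fin n)) (h : B.Nonempty) : ∀ s ∈ B, v s ≤ v (amax v B h) :=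
  (Finset.exists_max_image B v h).choose_spec.2

/-- the involution -/
noncomputable def iota (o : Finset (Fin n) × List (Fin n)) : Finset (Fin n) × List (Fin n) :=
  if h : (blockers v o.1 o.2).Nonempty then
    (o.1.erase (amax v _ h), o.2 ++ [amax v _ h])
  else if 2 ≤ o.2.length then
    o.2.getLast?.elim o fun y => (insert y o.1, o.2.dropLast)
  else o

lemma iota_pos {S : Finset (Fin n)} {l : List (Fin n)}
    (h : (blockers v S l).Nonempty) :
    iota v (S, l) = (S.erase (amax v _ h), l ++ [amax v _ h]) := by
  simp only [iota, dif_pos h]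

lemma iota_neg2 {S : Finset (Fin n)} {l : List (Fin n)} (hne : l ≠ [])
    (h : ¬ (blockers v S l).Nonempty) (h2 : 2 ≤ l.length) :
    iota v (S, l) = (insert (l.getLast hne) S, l.dropLast) := by
  simp only [iota, dif_neg h, if_pos h2, List.getLast?_eq_getLast hne, Option.elim]

lemma iota_fix {S : Finset (Fin n)} {l : List (Fin n)}
    (h : ¬ (blockers v S l).Nonempty) (h2 : ¬ 2 ≤ l.length) :
    iota v (S, l) = (S, l) := by
  simp only [iota, dif_neg h, if_neg h2]

lemma iota_spec {k : ℕ} {S : Finset (Fin n)} {l : List (Fin n)}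
    (hch : chainP v S) (hco : corrL v l) (hne : l ≠ [])
    (hlen : S.card + l.length = k + 1)
    (hmove : (blockers v S l).Nonempty ∨ 2 ≤ l.length) :
    (iota v (S, l)) ∈ Om v k ∧
    ((blockers v (iota v (S,l)).1 (iota v (S,l)).2).Nonempty ∨ 2 ≤ (iota v (S,l)).2.length) ∧
    fw (S,l) + fw (iota v (S,l)) = 0 ∧
    iota v (iota v (S,l)) = (S,l) ∧
    iota v (S,l) ≠ (S,l) := by
  by_cases hB : (blockers v S l).Nonempty
  · -- case B : move the maximal blocker to the end of the list
    set s₀ := amax v (blockers v S l) hB with hs₀def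
    have hmem := amax_mem v _ hB
    rw [mem_blockers v hne] at hmem
    obtain ⟨hs₀S, hs₀last, a, ha, haa⟩ := hmem
    have himg := iota_pos v hB
    have hcard1 : 1 ≤ S.card := Finset.card_pos.2 ⟨s₀, hs₀S⟩
    have hcorr' : corrL v (l ++ [s₀]) := (corrL_concat v hne s₀).2 ⟨hco, hs₀last, a, ha, haa⟩
    have hchain' : chainP v (S.erase s₀) := fun a' ha' b' hb' hab' =>
      hch a' (Finset.mem_of_mem_erase ha') b' (Finset.mem_of_mem_erase hb') hab'
    have hconcatne : l ++ [s₀] ≠ [] := by simp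
    have hBempty : blockers v (S.erase s₀) (l ++ [s₀]) = ∅ := by
      rw [Finset.eq_empty_iff_forall_notMem]
      intro s hs
      rw [mem_blockers v hconcatne] at hs
      obtain ⟨hsS', hlast', a', ha', haa'⟩ := hs
      rw [List.getLast_concat] at hlast'
      have hsS := Finset.mem_of_mem_erase hsS'
      have hsne : s ≠ s₀ := Finset.ne_of_mem_erase hsS'
      have hdist := hch s hsS s₀ hs₀S hsne
      have hges : v s₀ + 1 ≤ v s := by
        rcases le_abs.1 hdist with h | h
        · linarith
        · exact absurd (by linarith) hlast'
      rcases List.mem_append.1 ha' with hal | has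
      · have hbl : s ∈ blockers v S l := by
          rw [mem_blockers v hne]
          exact ⟨hsS, fun hc => hs₀last (by linarith), a', hal, haa'⟩
        have := amax_max v _ hB s hbl
        linarith
      · simp only [List.mem_singleton] at has
        rw [has] at haa'
        exact haa' hges
    refine ⟨?_, ?_, ?_, ?_, ?_⟩
    · rw [himg, mem_Om]
      refine ⟨hchain', hcorr', hconcatne, ?_⟩
      rw [Finset.card_erase_of_mem hs₀S, List.length_append, List.length_singleton]
      omega
    · right
      rw [himg]
      show 2 ≤ (l ++ [s₀]).length
      rw [List.length_append, List.length_singleton]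
      have : 0 < l.length := List.length_pos_iff.2 hne
      omega
    · rw [himg]
      obtain ⟨c, hc⟩ : ∃ c, S.card = c + 1 := ⟨S.card - 1, by omega⟩
      simp only [fw, Finset.card_erase_of_mem hs₀S, hc, Nat.add_sub_cancel]
      rw [← Finset.mul_prod_erase S _ hs₀S, List.map_append, List.prod_append]
      simp only [List.map_cons, List.map_nil, List.prod_cons, List.prod_nil]
      rw [pow_succ]
      ring
    · rw [himg, iota_neg2 v hconcatne
        (by rw [hBempty]; simp)
        (by rw [List.length_append, List.length_singleton]
            have := List.length_pos_iff.2 hne; omega)]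
      rw [List.getLast_concat, List.dropLast_concat, Finset.insert_erase hs₀S]
    · rw [himg]
      intro hcontra
      have := congrArg (fun p => p.2.length) hcontra
      simp at this
  · -- case A : move the last element of the list into the chain
    have h2 : 2 ≤ l.length := hmove.resolve_left hB
    set d := l.dropLast with hd
    set y := l.getLast hne with hy
    have hdec : d ++ [y] = l := List.dropLast_append_getLast hne
    have hdlen : d.length = l.length - 1 := List.length_dropLast (xs := l)
    have hdne : d ≠ [] := List.length_pos_iff.1 (by omega)
    have hcorrl : corrL v (d ++ [y]) := by rwa [hdec]
    obtain ⟨hcod, hjy, a, ha, hay⟩ := (corrL_concat v hdne y).1 hcorrl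
    have himg : iota v (S, l) = (insert y S, d) := iota_neg2 v hne hB h2
    have hsep : ∀ s ∈ S, v s + 1 ≤ v y ∨ v y + 1 ≤ v s := by
      intro s hs
      by_contra hc
      push_neg at hc
      exact hB ⟨s, (mem_blockers v hne).2
        ⟨hs, not_le.2 hc.1, y, List.getLast_mem hne, not_le.2 hc.2⟩⟩
    have hynotS : y ∉ S := fun hyS => by rcases hsep y hyS with h | h <;> linarith
    have hchain' : chainP v (insert y S) := by
      intro a' ha' b' hb' hab'
      rcases Finset.mem_insert.1 ha' with rfl | ha'S
      · rcases Finset.mem_insert.1 hb' with rfl | hb'S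
        · exact absurd rfl hab'
        · rcases hsep b' hb'S with h | h
          · rw [le_abs]; left; linarith
          · rw [le_abs]; right; linarith
      · rcases Finset.mem_insert.1 hb' with rfl | hb'S
        · rcases hsep a' ha'S with h | h
          · rw [le_abs]; right; linarith
          · rw [le_abs]; left; linarith
        · exact hch a' ha'S b' hb'S hab'
    have hyB : y ∈ blockers v (insert y S) d :=
      (mem_blockers v hdne).2 ⟨Finset.mem_insert_self y S, hjy, a, ha, hay⟩
    have hBne : (blockers v (insert y S) d).Nonempty := ⟨y, hyB⟩
    refine ⟨?_, ?_, ?_, ?_, ?_⟩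
    · rw [himg, mem_Om]
      refine ⟨hchain', hcod, hdne, ?_⟩
      show (insert y S).card + d.length = k + 1
      rw [Finset.card_insert_of_notMem hynotS]
      omega
    · left
      rw [himg]
      exact hBne
    · rw [himg]
      simp only [fw, Finset.card_insert_of_notMem hynotS]
      rw [Finset.prod_insert hynotS]
      have hlp : (l.map (MvPolynomial.X : Fin n → MvPolynomial (Fin n) ℤ)).prod =
          (d.map (MvPolynomial.X : Fin n → MvPolynomial (Fin n) ℤ)).prod * MvPolynomial.X y := by
        rw [← hdec, List.map_append, List.prod_append]
        simp
      rw [hlp, pow_succ]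
      ring
    · rw [himg]
      have hmax : amax v _ hBne = y := by
        have h1 := amax_max v _ hBne y hyB
        have h2' := amax_mem v _ hBne
        rw [mem_blockers v hdne] at h2'
        obtain ⟨hmem, hlast', a', ha', ha'x⟩ := h2'
        rcases Finset.mem_insert.1 hmem with h | hmemS
        · exact h
        · exfalso
          refine hB ⟨_, (mem_blockers v hne).2 ⟨hmemS, fun hc => ?_, a', ?_, ha'x⟩⟩
          · rw [← hy] at hc; linarith
          · rw [← hdec]; exact List.mem_append_left _ ha'
      rw [iota_pos v hBne, hmax, Finset.erase_insert hynotS, hdec]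
    · rw [himg]
      intro hcontra
      have := congrArg (fun p => p.2.length) hcontra
      simp only [hdlen] at this
      omega

lemma fix_char {k : ℕ} {o : Finset (Fin n) × List (Fin n)}
    (ho : o ∈ (Om v k).filter
      (fun o => ¬((blockers v o.1 o.2).Nonempty ∨ 2 ≤ o.2.length))) :
    ∃ S y, o = (S, [y]) ∧ y ∉ S ∧ S.card = k ∧ chainP v (insert y S) := by
  rw [Finset.mem_filter, mem_Om] at ho
  obtain ⟨⟨h1, h2, h3, h4⟩, h5⟩ := ho
  push_neg at h5
  obtain ⟨hBe, hlt⟩ := h5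
  obtain ⟨S, l⟩ := o
  have h1' : chainP v S := h1
  have h3' : l ≠ [] := h3
  have h4' : S.card + l.length = k + 1 := h4
  have hlt' : l.length < 2 := hlt
  have hBe' : ¬ (blockers v S l).Nonempty := Finset.not_nonempty_iff_eq_empty.2 hBe
  have hlen1 : l.length = 1 := by
    have := List.length_pos_iff.2 h3'
    omega
  obtain ⟨y, rfl⟩ := List.length_eq_one_iff.1 hlen1
  have hsep : ∀ s ∈ S, v s + 1 ≤ v y ∨ v y + 1 ≤ v s := by
    intro s hs
    by_contra hc
    push_neg at hc
    exact hBe' ⟨s, (mem_blockers v h3').2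
      ⟨hs, not_le.2 hc.1, y, by simp, not_le.2 hc.2⟩⟩
  have hynotS : y ∉ S := fun hyS => by rcases hsep y hyS with h | h <;> linarith
  have hchain' : chainP v (insert y S) := by
    intro a' ha' b' hb' hab'
    rcases Finset.mem_insert.1 ha' with rfl | ha'S
    · rcases Finset.mem_insert.1 hb' with rfl | hb'S
      · exact absurd rfl hab'
      · rcases hsep b' hb'S with h | h
        · rw [le_abs]; left; linarith
        · rw [le_abs]; right; linarith
    · rcases Finset.mem_insert.1 hb' with rfl | hb'S
      · rcases hsep a' ha'S with h | h
        · rw [le_abs]; right; linarith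
        · rw [le_abs]; left; linarith
      · exact h1' a' ha'S b' hb'S hab'
  refine ⟨S, y, rfl, hynotS, ?_, hchain'⟩
  simp at h4'
  omega

lemma star (k : ℕ) :
    ∑ i ∈ Finset.range (k+1), (-1 : MvPolynomial (Fin n) ℤ)^i * eGfin n v i *
        (∑ w ∈ corrects n (k+1-i) v, ∏ j, MvPolynomial.X (w j))
      = (-1)^k * ((k+1 : ℕ) : MvPolynomial (Fin n) ℤ) * eGfin n v (k+1) := by
  rw [LHS_eq]
  rw [← Finset.sum_filter_add_sum_filter_not (Om v k)
      (fun o => (blockers v o.1 o.2).Nonempty ∨ 2 ≤ o.2.length) fw]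
  have hmove : ∑ o ∈ (Om v k).filter
      (fun o => (blockers v o.1 o.2).Nonempty ∨ 2 ≤ o.2.length), fw o = 0 := by
    apply Finset.sum_involution (fun o _ => iota v o)
    · intro o ho
      rw [Finset.mem_filter, mem_Om] at ho
      obtain ⟨⟨h1, h2, h3, h4⟩, h5⟩ := ho
      obtain ⟨S, l⟩ := o
      exact (iota_spec v h1 h2 h3 h4 h5).2.2.1
    · intro o ho _
      rw [Finset.mem_filter, mem_Om] at ho
      obtain ⟨⟨h1, h2, h3, h4⟩, h5⟩ := ho
      obtain ⟨S, l⟩ := o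
      exact (iota_spec v h1 h2 h3 h4 h5).2.2.2.2
    · intro o ho
      rw [Finset.mem_filter, mem_Om] at ho
      obtain ⟨⟨h1, h2, h3, h4⟩, h5⟩ := ho
      obtain ⟨S, l⟩ := o
      obtain ⟨hOm, hm, _, _, _⟩ := iota_spec v h1 h2 h3 h4 h5
      exact Finset.mem_filter.2 ⟨hOm, hm⟩
    · intro o ho
      rw [Finset.mem_filter, mem_Om] at ho
      obtain ⟨⟨h1, h2, h3, h4⟩, h5⟩ := ho
      obtain ⟨S, l⟩ := o
      exact (iota_spec v h1 h2 h3 h4 h5).2.2.2.1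
  rw [hmove, zero_add]
  have hfix : ∑ o ∈ (Om v k).filter
      (fun o => ¬((blockers v o.1 o.2).Nonempty ∨ 2 ≤ o.2.length)), fw o
      = ∑ p ∈ (chainsF v (k+1)).sigma (fun T => (T : Finset (Fin n))),
          ((-1)^k * ∏ a ∈ p.1, MvPolynomial.X a : MvPolynomial (Fin n) ℤ) := by
    refine Finset.sum_bij
      (i := fun o ho => ⟨insert (o.2.getLast
        (((mem_Om v).1 (Finset.mem_filter.1 ho).1).2.2.1)) o.1,
        o.2.getLast (((mem_Om v).1 (Finset.mem_filter.1 ho).1).2.2.1)⟩)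
      ?_ ?_ ?_ ?_
    · intro o ho
      obtain ⟨S, y, rfl, hynotS, hcard, hchain⟩ := fix_char v ho
      rw [Finset.mem_sigma]
      refine ⟨(mem_chainsF v).2 ⟨?_, ?_⟩, ?_⟩
      · show (insert y S).card = k + 1
        rw [Finset.card_insert_of_notMem hynotS, hcard]
      · show chainP v (insert y S)
        exact hchain
      · exact Finset.mem_insert_self _ _
    · intro o₁ ho₁ o₂ ho₂ heq
      obtain ⟨S₁, y₁, rfl, hy₁, hc₁, -⟩ := fix_char v ho₁
      obtain ⟨S₂, y₂, rfl, hy₂, hc₂, -⟩ := fix_char v ho₂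
      have hy : y₁ = y₂ :=
        congrArg (fun p : (Σ _ : Finset (Fin n), Fin n) => p.2) heq
      subst hy
      have hT : insert y₁ S₁ = insert y₁ S₂ :=
        congrArg (fun p : (Σ _ : Finset (Fin n), Fin n) => p.1) heq
      have hSS : S₁ = S₂ := by
        have h := congrArg (fun T => T.erase y₁) hT
        simpa [Finset.erase_insert hy₁, Finset.erase_insert hy₂] using h
      rw [hSS]
    · rintro ⟨T, y⟩ hp
      simp only [Finset.mem_sigma, mem_chainsF] at hp
      obtain ⟨⟨hTcard, hTchain⟩, hyT⟩ := hp
      have hmem : (T.erase y, [y]) ∈ (Om v k).filter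
          (fun o => ¬((blockers v o.1 o.2).Nonempty ∨ 2 ≤ o.2.length)) := by
        rw [Finset.mem_filter, mem_Om]
        refine ⟨⟨?_, corrL_singleton v y, by simp, ?_⟩, ?_⟩
        · exact fun a' ha' b' hb' hab' =>
            hTchain a' (Finset.mem_of_mem_erase ha') b' (Finset.mem_of_mem_erase hb') hab'
        · show (T.erase y).card + 1 = k + 1
          rw [Finset.card_erase_of_mem hyT, hTcard]
          omega
        · push_neg
          constructor
          · rw [← Finset.not_nonempty_iff_eq_empty]; rintro ⟨s, hs⟩
            have hne9 : ([y] : List (Fin n)) ≠ [] := by simp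
            rw [mem_blockers v hne9] at hs
            obtain ⟨hsT, hlast, b, hbmem, hbx⟩ := hs
            simp only [List.mem_singleton] at hbmem
            rw [hbmem] at hbx
            have hsy : s ≠ y := Finset.ne_of_mem_erase hsT
            have hd := hTchain s (Finset.mem_of_mem_erase hsT) y hyT hsy
            have hlast' : ¬ (v s + 1 ≤ v y) := hlast
            rcases le_abs.1 hd with h | h
            · exact hlast' (by linarith)
            · exact hbx (by linarith)
          · show ((T.erase y, [y]).2.length) < 2
            simp
      refine ⟨(T.erase y, [y]), hmem, ?_⟩
      show (⟨insert y (T.erase y), y⟩ : Σ _ : Finset (Fin n), Fin n) = ⟨T, y⟩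
      rw [Finset.insert_erase hyT]
    · intro o ho
      obtain ⟨S, y, rfl, hynotS, hcard, hchain⟩ := fix_char v ho
      show fw (S, [y]) =
        (-1 : MvPolynomial (Fin n) ℤ)^k * ∏ a ∈ insert y S, MvPolynomial.X a
      simp only [fw]
      rw [Finset.prod_insert hynotS, hcard]
      simp only [List.map_cons, List.map_nil, List.prod_cons, List.prod_nil]
      ring
  rw [hfix, Finset.sum_sigma]
  rw [eGfin_eq, Finset.mul_sum]
  refine Finset.sum_congr rfl fun T hT => ?_
  dsimp only
  rw [Finset.sum_const, ((mem_chainsF v).1 hT).1, nsmul_eq_mul]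
  push_cast
  ring

lemma eG0 : eGfin n v 0 = 1 := by
  rw [eGfin, Finset.powersetCard_zero]
  rw [Finset.filter_true_of_mem (by
    intro S hS
    simp only [Finset.mem_singleton] at hS
    subst hS
    intro a ha
    exact absurd ha (Finset.notMem_empty a))]
  simp

lemma pG_eq : ∀ k : ℕ, 0 < k →
    pG (eGfin n v) k =
      ∑ w ∈ corrects n k v, ∏ i, (MvPolynomial.X (w i) : MvPolynomial (Fin n) ℤ) := by
  intro k
  induction k using Nat.strong_induction_on with
  | _ k ih =>
    intro hk
    obtain ⟨k, rfl⟩ : ∃ m, k = m + 1 := ⟨k - 1, by omega⟩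
    rw [pG]
    have hstar := star v k
    rw [Finset.sum_range_succ'] at hstar
    simp only [pow_zero, one_mul, Nat.sub_zero, eG0] at hstar
    have hsum : (∑ i ∈ Finset.range k, (-1 : MvPolynomial (Fin n) ℤ)^(i+1) *
          eGfin n v (i+1) * (∑ w ∈ corrects n (k+1-(i+1)) v, ∏ j, MvPolynomial.X (w j)))
        = - ∑ i ∈ Finset.range k, (-1 : MvPolynomial (Fin n) ℤ)^i *
          eGfin n v (i+1) * (∑ w ∈ corrects n (k+1-(i+1)) v, ∏ j, MvPolynomial.X (w j)) := by
      rw [← Finset.sum_neg_distrib]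
      exact Finset.sum_congr rfl fun i _ => by rw [pow_succ]; ring
    rw [hsum] at hstar
    have hrw : ∀ i ∈ Finset.range k,
        (-1 : MvPolynomial (Fin n) ℤ)^i * eGfin n v (i+1) * pG (eGfin n v) (k-i)
        = (-1)^i * eGfin n v (i+1) *
            (∑ w ∈ corrects n (k+1-(i+1)) v, ∏ j, MvPolynomial.X (w j)) := by
      intro i hi
      rw [Finset.mem_range] at hi
      rw [show k + 1 - (i+1) = k - i from Nat.succ_sub_succ k i]
      exact congrArg (fun z => (-1 : MvPolynomial (Fin n) ℤ)^i * eGfin n v (i+1) * z)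
        (ih (k-i) (by omega) (by omega))
    rw [Finset.sum_congr rfl hrw]
    linear_combination -hstar

lemma prod_X_eq_monomial {m : ℕ} (w : Fin m → Fin n) :
    (∏ i, (MvPolynomial.X (w i) : MvPolynomial (Fin n) ℤ)) =
      MvPolynomial.monomial (∑ i, Finsupp.single (w i) 1) 1 := by
  have key : ∀ s : Finset (Fin m),
      (∏ i ∈ s, (MvPolynomial.X (w i) : MvPolynomial (Fin n) ℤ)) =
        MvPolynomial.monomial (∑ i ∈ s, Finsupp.single (w i) 1) 1 := by
    intro s
    induction s using Finset.induction_on with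
    | empty => simp
    | insert a s h ih =>
      rw [Finset.prod_insert h, Finset.sum_insert h, ih]
      rw [show (MvPolynomial.X (w _) : MvPolynomial (Fin n) ℤ) =
        MvPolynomial.monomial (Finsupp.single (w _) 1) 1 from rfl]
      rw [MvPolynomial.monomial_mul, one_mul]
  exact key Finset.univ

end Stmt10

/-- for a unit interval order `U` with incomparability graph `G`,
the `G`-power sum `p_k^G = φ_G(p_k)` equals the sum, over all correct sequences
`(w_1, ..., w_k)` of elements of `U`, of the products `w_1 ⋯ w_k`; in
particular its coefficients are nonnegative integers. -/
theorem stmt10 (n k : ℕ) (hk : 0 < k) (v : Fin n → ℝ)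
    (hv : Function.Injective v) :
    (pG (eGfin n v) k = ∑ w ∈ corrects n k v, ∏ i : Fin k, MvPolynomial.X (w i)) ∧
    ∀ d : Fin n →₀ ℕ, 0 ≤ MvPolynomial.coeff d (pG (eGfin n v) k) := by
  have h1 := Stmt10.pG_eq v k hk
  refine ⟨h1, ?_⟩
  intro d
  rw [h1, MvPolynomial.coeff_sum]
  apply Finset.sum_nonneg
  intro w hw
  rw [Stmt10.prod_X_eq_monomial, MvPolynomial.coeff_monomial]
  split_ifs <;> norm_num
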